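/- Let E be a field extension of k of finite degree n, and let V be a k-linear subspace of E with 2·dim_k(V) > n. Then the multiplicative group E* is generated by the nonzero elements of V. -/

import Mathlib

/-- Let `E/k` be a field extension of finite degree `n`, and `V` a `k`-linear
subspace of `E` with `2 * dim_k V > n`.  Then the multiplicative group `Eˣ` is generated by
the (invertible, i.e. nonzero) elements of `V`. -/
theorem stmt_1 (k E : Type*) [Field k] [Field E] [Algebra k E]
    [FiniteDimensional k E] (n : ℕ) (hn : Module.finrank k E = n)
    (V : Submodule k E) (hV : 2 * Module.finrank k V > n) :
    Subgroup.closure {u : Eˣ | (u : E) ∈ V} = ⊤ := by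
  rw [eq_top_iff]
  intro u _
  -- consider W = u • V
  set f : E →ₗ[k] E := LinearMap.mulLeft k (u : E) with hf
  have hinj : Function.Injective f := by
    intro a b hab
    simp only [hf, LinearMap.mulLeft_apply] at hab
    exact mul_left_cancel₀ u.ne_zero hab
  set W : Submodule k E := V.map f with hW
  have hdimW : Module.finrank k W = Module.finrank k V :=
    (LinearEquiv.finrank_eq (Submodule.equivMapOfInjective f hinj V)).symm
  have hpos : 0 < Module.finrank k (V ⊓ W : Submodule k E) := by
    have h1 := Submodule.finrank_sup_add_finrank_inf_eq V W
    have h2 : Module.finrank k (V ⊔ W : Submodule k E) ≤ n := hn ▸ Submodule.finrank_le _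
    omega
  obtain ⟨v, hv, hvne⟩ := Submodule.exists_mem_ne_zero_of_ne_bot (Submodule.one_le_finrank_iff.mp hpos)
  obtain ⟨hvV, hvW⟩ := hv
  obtain ⟨w, hwV, hw⟩ := hvW
  simp only [hf, LinearMap.mulLeft_apply] at hw
  have hwne : w ≠ 0 := by rintro rfl; simp at hw; exact hvne hw.symm
  set vu : Eˣ := Units.mk0 v hvne
  set wu : Eˣ := Units.mk0 w hwne
  have hu : u = vu * wu⁻¹ := by
    apply Units.ext
    simp only [vu, wu, Units.val_mul, Units.val_inv_eq_inv_val, Units.val_mk0]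
    rw [eq_mul_inv_iff_mul_eq₀ hwne]
    exact hw
  rw [hu]
  exact mul_mem (Subgroup.subset_closure hvV)
    (inv_mem (Subgroup.subset_closure hwV))
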